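/- If ℓ(s_i w) > ℓ(w), then for every l, A_l(s_i w) is the disjoint union of A_l(w) and {s_i·α : α ∈ A_{l,i}(w)}, and the latter set is nonempty for at least one value of l. In particular A_l(w) ⊆ A_l(s_i w) for every l, and the set A_l(s_i w) is preserved under the entrywise action of s_i. -/

import Mathlib

def invCount {n : ℕ} (w : Equiv.Perm (Fin n)) : ℕ :=
  (Finset.univ.filter (fun p : Fin n × Fin n => p.1 < p.2 ∧ w p.2 < w p.1)).card

def simpleT (n : ℕ) (i : ℕ) (h : i + 1 < n) : Equiv.Perm (Fin n) :=
  Equiv.swap ⟨i, Nat.lt_of_succ_lt h⟩ ⟨i + 1, h⟩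

/-- The first `l` values of `w`, as a finset of natural numbers. -/
def firstVals {n : ℕ} (w : Equiv.Perm (Fin n)) (l : ℕ) : Finset ℕ :=
  (Finset.univ.filter (fun j : Fin n => (j : ℕ) < l)).image (fun j => (w j : ℕ))

/-- `w^l`: the increasing rearrangement of the first `l` values of `w`. -/
def wSorted {n : ℕ} (w : Equiv.Perm (Fin n)) (l : ℕ) : List ℕ :=
  (firstVals w l).sort (· ≤ ·)

/-- `A_l(w)`: strictly increasing sequences bounded entrywise by `w^l`. -/
def A {n : ℕ} (w : Equiv.Perm (Fin n)) (l : ℕ) : Set (List ℕ) :=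
  {a | a.Chain' (· < ·) ∧ List.Forall₂ (· ≤ ·) a (wSorted w l)}

/-- The entrywise action of the transposition `s_i = (i, i+1)` on a sequence,
followed by reordering increasingly. -/
def siAct (i : ℕ) (a : List ℕ) : List ℕ :=
  List.insertionSort (· ≤ ·) (a.map (fun x => Equiv.swap i (i + 1) x))

/-- `A_{l,i}(w) = {α ∈ A_l(w) : s_i·α ∉ A_l(w)}`. -/
def Ai {n : ℕ} (w : Equiv.Perm (Fin n)) (l : ℕ) (i : ℕ) : Set (List ℕ) :=
  {a | a ∈ A w l ∧ siAct i a ∉ A w l}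


open List

def AL (b : List ℕ) : Set (List ℕ) :=
  {a | a.Chain' (· < ·) ∧ List.Forall₂ (· ≤ ·) a b}

lemma map_swap_fix {i : ℕ} {p : List ℕ} (hp : ∀ x ∈ p, x ≠ i ∧ x ≠ i+1) :
    p.map (fun x => Equiv.swap i (i+1) x) = p := by
  conv_rhs => rw [← List.map_id p]
  exact List.map_congr_left (fun x hx => Equiv.swap_apply_of_ne_of_ne (hp x hx).1 (hp x hx).2)

lemma sorted_mid {i x : ℕ} {p q : List ℕ} (hp : ∀ y ∈ p, y < i) (hq : ∀ y ∈ q, i + 1 < y)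
    (hps : p.Pairwise (· < ·)) (hqs : q.Pairwise (· < ·)) (hx : i ≤ x) (hx' : x ≤ i + 1) :
    (p ++ x :: q).Pairwise (· < ·) := by
  rw [List.pairwise_append]
  refine ⟨hps, ?_, ?_⟩
  · rw [List.pairwise_cons]
    exact ⟨fun y hy => lt_of_le_of_lt hx' (hq y hy), hqs⟩
  · intro a ha b hb
    rcases List.mem_cons.mp hb with rfl | hb
    · exact lt_of_lt_of_le (hp a ha) hx
    · have h1 := hp a ha; have h2 := hq b hb; omega

lemma siAct_rep {i : ℕ} {p q : List ℕ} (hp : ∀ y ∈ p, y < i) (hq : ∀ y ∈ q, i + 1 < y)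
    (hps : p.Pairwise (· < ·)) (hqs : q.Pairwise (· < ·)) :
    siAct i (p ++ i :: q) = p ++ (i+1) :: q ∧ siAct i (p ++ (i+1) :: q) = p ++ i :: q := by
  have hmp : p.map (fun x => Equiv.swap i (i+1) x) = p :=
    map_swap_fix (fun x hx => by have := hp x hx; omega)
  have hmq : q.map (fun x => Equiv.swap i (i+1) x) = q :=
    map_swap_fix (fun x hx => by have := hq x hx; omega)
  constructor
  · show List.insertionSort _ _ = _
    rw [List.map_append, hmp, List.map_cons, hmq]
    simp only [Equiv.swap_apply_left]
    exact List.Pairwise.insertionSort_eq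
      ((sorted_mid hp hq hps hqs (by omega) (by omega)).imp le_of_lt)
  · show List.insertionSort _ _ = _
    rw [List.map_append, hmp, List.map_cons, hmq]
    simp only [Equiv.swap_apply_right]
    exact List.Pairwise.insertionSort_eq
      ((sorted_mid hp hq hps hqs (by omega) (by omega)).imp le_of_lt)


/-- decompose a sorted list at a member -/
lemma decomp_one {x : ℕ} {a : List ℕ} (ha : a.Pairwise (· < ·)) (hx : x ∈ a) :
    ∃ p q, a = p ++ x :: q ∧ (∀ y ∈ p, y < x) ∧ (∀ y ∈ q, x < y) ∧
      p.Pairwise (· < ·) ∧ q.Pairwise (· < ·) := by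
  obtain ⟨p, q, rfl⟩ := List.append_of_mem hx
  rw [List.pairwise_append] at ha
  obtain ⟨hp, hq, hcross⟩ := ha
  rw [List.pairwise_cons] at hq
  exact ⟨p, q, rfl, fun y hy => hcross y hy x (List.mem_cons_self),
    hq.1, hp, hq.2⟩

lemma decomp_i {i : ℕ} {a : List ℕ} (ha : a.Pairwise (· < ·)) (hi : i ∈ a) (hi1 : i+1 ∉ a) :
    ∃ p q, a = p ++ i :: q ∧ (∀ y ∈ p, y < i) ∧ (∀ y ∈ q, i + 1 < y) ∧
      p.Pairwise (· < ·) ∧ q.Pairwise (· < ·) := by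
  obtain ⟨p, q, rfl, h1, h2, h3, h4⟩ := decomp_one ha hi
  refine ⟨p, q, rfl, h1, fun y hy => ?_, h3, h4⟩
  have := h2 y hy
  have : y ≠ i + 1 := fun e => hi1 (e ▸ List.mem_append_right _ (List.mem_cons_of_mem _ hy))
  omega

lemma decomp_i1 {i : ℕ} {a : List ℕ} (ha : a.Pairwise (· < ·)) (hi1 : i+1 ∈ a) (hi : i ∉ a) :
    ∃ p q, a = p ++ (i+1) :: q ∧ (∀ y ∈ p, y < i) ∧ (∀ y ∈ q, i + 1 < y) ∧
      p.Pairwise (· < ·) ∧ q.Pairwise (· < ·) := by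
  obtain ⟨p, q, rfl, h1, h2, h3, h4⟩ := decomp_one ha hi1
  refine ⟨p, q, rfl, fun y hy => ?_, h2, h3, h4⟩
  have := h1 y hy
  have : y ≠ i := fun e => hi (e ▸ List.mem_append_left _ hy)
  omega

lemma decomp_both {i : ℕ} {a : List ℕ} (ha : a.Pairwise (· < ·)) (hi : i ∈ a) (hi1 : i+1 ∈ a) :
    ∃ p q, a = p ++ i :: (i+1) :: q ∧ (∀ y ∈ p, y < i) ∧ (∀ y ∈ q, i + 1 < y) ∧
      p.Pairwise (· < ·) ∧ q.Pairwise (· < ·) := by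
  obtain ⟨p, q, rfl, h1, h2, h3, h4⟩ := decomp_one ha hi
  have hq1 : i + 1 ∈ q := by
    rcases List.mem_append.mp hi1 with h | h
    · exact absurd (h1 _ h) (by omega)
    · rcases List.mem_cons.mp h with h | h
      · omega
      · exact h
  obtain ⟨q1, q2, rfl, g1, g2, g3, g4⟩ := decomp_one h4 hq1
  have hq1nil : q1 = [] := by
    cases q1 with
    | nil => rfl
    | cons z zs =>
      have := h2 z (List.mem_append_left _ (List.mem_cons_self))
      have := g1 z (List.mem_cons_self)
      omega
  subst hq1nil
  exact ⟨p, q2, by simp, h1, g2, h3, g4⟩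

lemma siAct_fix {i : ℕ} {a : List ℕ} (ha : a.Pairwise (· < ·)) (hiff : (i ∈ a ↔ i+1 ∈ a)) :
    siAct i a = a := by
  by_cases hi : i ∈ a
  · have hi1 := hiff.mp hi
    obtain ⟨p, q, rfl, h1, h2, h3, h4⟩ := decomp_both ha hi hi1
    have hmp : p.map (fun x => Equiv.swap i (i+1) x) = p :=
      map_swap_fix (fun x hx => by have := h1 x hx; omega)
    have hmq : q.map (fun x => Equiv.swap i (i+1) x) = q :=
      map_swap_fix (fun x hx => by have := h2 x hx; omega)
    show List.insertionSort _ _ = _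
    rw [List.map_append, hmp, List.map_cons, List.map_cons, hmq,
      Equiv.swap_apply_left, Equiv.swap_apply_right]
    have hperm : (p ++ (i+1) :: i :: q) ~ (p ++ i :: (i+1) :: q) :=
      List.Perm.append_left p (List.Perm.swap _ _ _)
    refine List.Perm.eq_of_pairwise' ?_ (ha.imp le_of_lt) (((List.perm_insertionSort _ _).trans hperm))
    exact List.pairwise_insertionSort _ _
  · have hi1 : i + 1 ∉ a := fun h => hi (hiff.mpr h)
    show List.insertionSort _ _ = _
    rw [map_swap_fix (fun x hx => ⟨fun e => hi (by rwa [e] at hx), fun e => hi1 (by rwa [e] at hx)⟩)]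
    exact List.Pairwise.insertionSort_eq (ha.imp le_of_lt)

lemma chain'_iff_sorted {a : List ℕ} : a.Chain' (· < ·) ↔ a.Pairwise (· < ·) :=
  List.isChain_iff_pairwise

lemma siAct_invol {i : ℕ} {a : List ℕ} (ha : a.Pairwise (· < ·)) :
    siAct i (siAct i a) = a := by
  by_cases hi : i ∈ a <;> by_cases hi1 : i + 1 ∈ a
  · rw [siAct_fix ha (by tauto), siAct_fix ha (by tauto)]
  · obtain ⟨p, q, rfl, h1, h2, h3, h4⟩ := decomp_i ha hi hi1
    rw [(siAct_rep h1 h2 h3 h4).1, (siAct_rep h1 h2 h3 h4).2]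
  · obtain ⟨p, q, rfl, h1, h2, h3, h4⟩ := decomp_i1 ha hi1 hi
    rw [(siAct_rep h1 h2 h3 h4).2, (siAct_rep h1 h2 h3 h4).1]
  · rw [siAct_fix ha (by tauto), siAct_fix ha (by tauto)]


lemma forall₂_le_iff' {a b : List ℕ} : List.Forall₂ (· ≤ ·) a b ↔
    a.length = b.length ∧ ∀ k (h : k < a.length) (h' : k < b.length), a[k] ≤ b[k] := by
  rw [List.forall₂_iff_get]
  simp [List.get_eq_getElem]

lemma len_mid (u v : List ℕ) (x : ℕ) : (u ++ x :: v).length = u.length + v.length + 1 := by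
  simp; omega

lemma getElem_mid (u v : List ℕ) (x : ℕ) (h : u.length < (u ++ x :: v).length) :
    (u ++ x :: v)[u.length] = x := by
  rw [List.getElem_append_right (le_refl _)]
  simp

lemma mid_cases (u v : List ℕ) (x : ℕ) (k : ℕ) (h : k < (u ++ x :: v).length) :
    (k < u.length ∧ (u ++ x :: v)[k] ∈ u) ∨ (k = u.length ∧ (u ++ x :: v)[k] = x) ∨
    (u.length < k ∧ (u ++ x :: v)[k] ∈ v) := by
  rcases Nat.lt_trichotomy k u.length with hk | hk | hk
  · left
    refine ⟨hk, ?_⟩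
    rw [List.getElem_append_left hk]
    exact List.getElem_mem _
  · right; left
    subst hk
    exact ⟨rfl, getElem_mid u v x h⟩
  · right; right
    refine ⟨hk, ?_⟩
    rw [List.getElem_append_right (le_of_lt hk)]
    obtain ⟨j, hj⟩ : ∃ j, k - u.length = j + 1 := ⟨k - u.length - 1, by omega⟩
    simp only [hj, List.getElem_cons_succ]
    exact List.getElem_mem _


lemma getElem_mid_ne (u v : List ℕ) (x y k : ℕ) (h : k < (u ++ x :: v).length)
    (h' : k < (u ++ y :: v).length) (hk : k ≠ u.length) :
    (u ++ x :: v)[k] = (u ++ y :: v)[k] := by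
  rcases Nat.lt_or_ge k u.length with hlt | hge
  · rw [List.getElem_append_left hlt, List.getElem_append_left hlt]
  · have hgt : u.length < k := by omega
    rw [List.getElem_append_right (le_of_lt hgt), List.getElem_append_right (le_of_lt hgt)]
    obtain ⟨j, hj⟩ : ∃ j, k - u.length = j + 1 := ⟨k - u.length - 1, by omega⟩
    simp only [hj, List.getElem_cons_succ]

lemma sorted_getElem_inj {c : List ℕ} (hc : c.Pairwise (· < ·)) {j k : ℕ}
    (hj : j < c.length) (hk : k < c.length) (he : c.get ⟨j, hj⟩ = c.get ⟨k, hk⟩) : j = k := by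
  have hc' := List.pairwise_iff_getElem.mp hc
  simp only [List.get_eq_getElem] at he
  rcases Nat.lt_trichotomy j k with hlt | hlt | hlt
  · have := hc' j k hj hk hlt; rw [he] at this; exact absurd this (lt_irrefl _)
  · exact hlt
  · have := hc' k j hk hj hlt; rw [he] at this; exact absurd this (lt_irrefl _)

lemma forall₂_le_trans {a b c : List ℕ} (h1 : List.Forall₂ (· ≤ ·) a b)
    (h2 : List.Forall₂ (· ≤ ·) b c) : List.Forall₂ (· ≤ ·) a c := by
  rw [forall₂_le_iff'] at *
  exact ⟨h1.1.trans h2.1, fun k h h' => le_trans (h1.2 k h (by omega)) (h2.2 k (by omega) h')⟩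

lemma forall₂_mid_le {u v : List ℕ} {x y : ℕ} (hxy : x ≤ y) :
    List.Forall₂ (· ≤ ·) (u ++ x :: v) (u ++ y :: v) := by
  refine List.rel_append ?_ ?_
  · exact List.forall₂_same.mpr (fun z _ => le_refl z)
  · exact List.Forall₂.cons hxy (List.forall₂_same.mpr (fun z _ => le_refl z))


lemma AL_closure {i : ℕ} {b : List ℕ} (hb : b.Pairwise (· < ·)) (hiff : i ∈ b ↔ i + 1 ∈ b)
    {a : List ℕ} (ha : a ∈ AL b) : siAct i a ∈ AL b := by
  obtain ⟨hch, hf⟩ := ha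
  have has : a.Pairwise (· < ·) := chain'_iff_sorted.mp hch
  by_cases hi : i ∈ a
  · by_cases hi1 : i + 1 ∈ a
    · rw [siAct_fix has (by tauto)]; exact ⟨hch, hf⟩
    · -- i ∈ a, i+1 ∉ a
      obtain ⟨p, q, rfl, h1, h2, h3, h4⟩ := decomp_i has hi hi1
      rw [(siAct_rep h1 h2 h3 h4).1]
      refine ⟨chain'_iff_sorted.mpr (sorted_mid h1 h2 h3 h4 (by omega) (by omega)), ?_⟩
      rw [forall₂_le_iff'] at hf ⊢
      obtain ⟨hlen, hpt⟩ := hf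
      have hlen' : (p ++ (i+1) :: q).length = b.length := by
        simp only [len_mid] at hlen ⊢; omega
      refine ⟨hlen', fun k hk hk' => ?_⟩
      by_cases hkp : k = p.length
      · subst hkp
        have hmid : (p ++ (i+1) :: q)[p.length] = i + 1 := getElem_mid p q (i+1) hk
        rw [hmid]
        -- need i + 1 ≤ b[p.length]
        have hkb : p.length < b.length := hk'
        have hka : p.length < (p ++ i :: q).length := by rw [len_mid]; omega
        have hap : (p ++ i :: q)[p.length] = i := getElem_mid p q i hka
        have hble : i ≤ b[p.length] := by
          have := hpt p.length hka hkb; rwa [hap] at this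
        rcases Nat.lt_or_ge i b[p.length] with hgt | hle
        · omega
        · -- b[p.length] = i : derive contradiction
          exfalso
          have hbi : b[p.length] = i := by omega
          have hib : i ∈ b := by rw [← hbi]; exact List.getElem_mem _
          have hib1 : i + 1 ∈ b := hiff.mp hib
          obtain ⟨u, v, hbe, hu, hv, hus, hvs⟩ := decomp_both hb hib hib1
          -- p.length = u.length
          have hpu : p.length = u.length := by
            subst hbe
            rcases mid_cases u ((i+1) :: v) i p.length hkb with ⟨_, hm⟩ | ⟨he, _⟩ | ⟨_, hm⟩
            · rw [hbi] at hm; exact absurd (hu _ hm) (by omega)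
            · exact he
            · rw [hbi] at hm
              rcases List.mem_cons.mp hm with h' | h'
              · omega
              · exact absurd (hv _ h') (by omega)
          -- b[u.length + 1] = i + 1
          have hlenb : b.length = u.length + v.length + 2 := by
            subst hbe; simp; omega
          have hb1 : u.length + 1 < b.length := by omega
          have hbv : b[u.length + 1] = i + 1 := by
            subst hbe
            have heq : u ++ i :: (i+1) :: v = (u ++ [i]) ++ (i+1) :: v := by simp
            rw [List.getElem_of_eq heq hb1]
            have hl1 : u.length + 1 = (u ++ [i]).length := by simp
            simp only [hl1]
            exact getElem_mid (u ++ [i]) v (i+1) (by simp)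
          -- a[p.length + 1] ∈ q, so > i+1, but ≤ b[p.length+1] = i+1
          have hka1 : p.length + 1 < (p ++ i :: q).length := by
            have := hlen; rw [len_mid] at this ⊢; omega
          have hkb1 : p.length + 1 < b.length := by omega
          have haq : (p ++ i :: q)[p.length + 1] ∈ q := by
            rcases mid_cases p q i (p.length + 1) hka1 with ⟨h', _⟩ | ⟨h', _⟩ | ⟨_, hm⟩
            · omega
            · omega
            · exact hm
          have hgt : i + 1 < (p ++ i :: q)[p.length + 1] := h2 _ haq
          have hle2 := hpt (p.length + 1) hka1 hkb1
          simp only [hpu] at hgt hle2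
          rw [hbv] at hle2
          omega
      · have := hpt k (by rw [len_mid] at hk ⊢; omega) hk'
        rwa [getElem_mid_ne p q (i+1) i k hk (by rw [len_mid] at hk ⊢; omega) hkp]
  · by_cases hi1 : i + 1 ∈ a
    · -- i+1 ∈ a, i ∉ a
      obtain ⟨p, q, rfl, h1, h2, h3, h4⟩ := decomp_i1 has hi1 hi
      rw [(siAct_rep h1 h2 h3 h4).2]
      refine ⟨chain'_iff_sorted.mpr (sorted_mid h1 h2 h3 h4 (by omega) (by omega)), ?_⟩
      exact forall₂_le_trans (forall₂_mid_le (by omega)) hf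
    · rw [siAct_fix has (by tauto)]; exact ⟨hch, hf⟩


section case2
variable {i : ℕ} {u v : List ℕ}

lemma AL_sub (hu : ∀ y ∈ u, y < i) (hv : ∀ y ∈ v, i + 1 < y) :
    AL (u ++ i :: v) ⊆ AL (u ++ (i+1) :: v) :=
  fun _ ha => ⟨ha.1, forall₂_le_trans ha.2 (forall₂_mid_le (by omega))⟩

lemma AL_fwd (hu : ∀ y ∈ u, y < i) (hv : ∀ y ∈ v, i + 1 < y)
    (hus : u.Pairwise (· < ·)) (hvs : v.Pairwise (· < ·))
    {a : List ℕ} (ha : a ∈ AL (u ++ i :: v)) (ha' : siAct i a ∉ AL (u ++ i :: v)) :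
    siAct i a ∈ AL (u ++ (i+1) :: v) := by
  obtain ⟨hch, hf⟩ := ha
  have has : a.Pairwise (· < ·) := chain'_iff_sorted.mp hch
  by_cases hi : i ∈ a
  · by_cases hi1 : i + 1 ∈ a
    · rw [siAct_fix has (by tauto)] at ha' ⊢; exact absurd ⟨hch, hf⟩ ha'
    · obtain ⟨p, q, rfl, h1, h2, h3, h4⟩ := decomp_i has hi hi1
      rw [(siAct_rep h1 h2 h3 h4).1] at ha' ⊢
      have hch' : Chain' (· < ·) (p ++ (i+1) :: q) :=
        chain'_iff_sorted.mpr (sorted_mid h1 h2 h3 h4 (by omega) (by omega))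
      rw [forall₂_le_iff'] at hf
      obtain ⟨hlen, hpt⟩ := hf
      have hlen' : (p ++ (i+1) :: q).length = (u ++ i :: v).length := by
        simp only [len_mid] at hlen ⊢; omega
      have hka : p.length < (p ++ i :: q).length := by rw [len_mid]; omega
      have hkb : p.length < (u ++ i :: v).length := by simp only [len_mid] at hlen ⊢; omega
      have hap : (p ++ i :: q)[p.length] = i := getElem_mid p q i hka
      have hble : i ≤ (u ++ i :: v)[p.length] := by
        have := hpt p.length hka hkb; rwa [hap] at this
      rcases mid_cases u v i p.length hkb with ⟨hlt, hm⟩ | ⟨heq, _⟩ | ⟨hgt, hm⟩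
      · exact absurd (hu _ hm) (by omega)
      · -- p.length = u.length : show membership in AL b'
        refine ⟨hch', ?_⟩
        rw [forall₂_le_iff']
        refine ⟨by simp only [len_mid] at hlen' ⊢; omega, fun k hk hk' => ?_⟩
        by_cases hkp : k = p.length
        · subst hkp
          rw [getElem_mid p q (i+1) hk]
          simp only [heq]
          rw [getElem_mid u v (i+1) (by simp only [len_mid]; omega)]
        · have hk2 : k < (p ++ i :: q).length := by rw [len_mid] at hk ⊢; omega
          have hk3 : k < (u ++ i :: v).length := by rw [len_mid] at hk' ⊢; omega
          have := hpt k hk2 hk3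
          rw [getElem_mid_ne p q (i+1) i k hk hk2 hkp,
            getElem_mid_ne u v (i+1) i k hk' hk3 (by omega)]
          exact this
      · -- p.length > u.length : siAct a ∈ AL b, contradiction
        exfalso
        apply ha'
        refine ⟨hch', ?_⟩
        rw [forall₂_le_iff']
        refine ⟨by simp only [len_mid] at hlen ⊢; omega, fun k hk hk' => ?_⟩
        by_cases hkp : k = p.length
        · subst hkp
          rw [getElem_mid p q (i+1) hk]
          have := hv _ hm
          omega
        · have hk2 : k < (p ++ i :: q).length := by rw [len_mid] at hk ⊢; omega
          have := hpt k hk2 hk'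
          rwa [getElem_mid_ne p q (i+1) i k hk hk2 hkp]
  · by_cases hi1 : i + 1 ∈ a
    · obtain ⟨p, q, rfl, h1, h2, h3, h4⟩ := decomp_i1 has hi1 hi
      rw [(siAct_rep h1 h2 h3 h4).2] at ha'
      exact absurd ⟨chain'_iff_sorted.mpr (sorted_mid h1 h2 h3 h4 (by omega) (by omega)),
        forall₂_le_trans (forall₂_mid_le (by omega)) hf⟩ ha'
    · rw [siAct_fix has (by tauto)] at ha' ⊢; exact absurd ⟨hch, hf⟩ ha'

lemma AL_bwd (hu : ∀ y ∈ u, y < i) (hv : ∀ y ∈ v, i + 1 < y)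
    (hus : u.Pairwise (· < ·)) (hvs : v.Pairwise (· < ·))
    {cl : List ℕ} (hc : cl ∈ AL (u ++ (i+1) :: v)) (hc' : cl ∉ AL (u ++ i :: v)) :
    ∃ a, (a ∈ AL (u ++ i :: v) ∧ siAct i a ∉ AL (u ++ i :: v)) ∧ siAct i a = cl := by
  obtain ⟨hch, hf'⟩ := hc
  have hcs : cl.Pairwise (· < ·) := chain'_iff_sorted.mp hch
  rw [forall₂_le_iff'] at hf'
  obtain ⟨hlen', hpt'⟩ := hf'
  have hlen : cl.length = (u ++ i :: v).length := by
    simp only [len_mid] at hlen' ⊢; omega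
  have hnf : ¬ List.Forall₂ (· ≤ ·) cl (u ++ i :: v) := fun hf => hc' ⟨hch, hf⟩
  rw [forall₂_le_iff'] at hnf
  push_neg at hnf
  obtain ⟨k, hk, hk', hklt⟩ := hnf hlen
  have hku : k = u.length := by
    by_contra hne
    have hkb' : k < (u ++ (i+1) :: v).length := by simp only [len_mid] at hk' ⊢; omega
    have h5 := hpt' k hk hkb'
    rw [getElem_mid_ne u v (i+1) i k hkb' hk' hne] at h5
    omega
  subst hku
  have hkb' : u.length < (u ++ (i+1) :: v).length := by simp only [len_mid] at hk' ⊢; omega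
  have hcu : cl[u.length] = i + 1 := by
    have h5 := hpt' u.length hk hkb'
    rw [getElem_mid u v (i+1) hkb'] at h5
    rw [getElem_mid u v i hk'] at hklt
    omega
  have hmem1 : i + 1 ∈ cl := by rw [← hcu]; exact List.getElem_mem _
  have hinot : i ∉ cl := by
    intro hi
    obtain ⟨p, q, hce, g1, g2, g3, g4⟩ := decomp_both hcs hi hmem1
    have hlc : cl.length = p.length + q.length + 2 := by rw [hce]; simp; omega
    have hpb : p.length + 1 < cl.length := by omega
    have hcp1 : cl[p.length + 1] = i + 1 := by
      rw [List.getElem_of_eq hce hpb]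
      have heq2 : p ++ i :: (i+1) :: q = (p ++ [i]) ++ (i+1) :: q := by simp
      rw [List.getElem_of_eq heq2]
      have hl1 : p.length + 1 = (p ++ [i]).length := by simp
      simp only [hl1]
      exact getElem_mid (p ++ [i]) q (i+1) (by simp)
    have hup : u.length = p.length + 1 :=
      sorted_getElem_inj hcs hk hpb (by simp only [List.get_eq_getElem]; rw [hcu, hcp1])
    have hpc : p.length < cl.length := by omega
    have hcp : cl[p.length] = i := by
      rw [List.getElem_of_eq hce hpc]
      exact getElem_mid p ((i+1) :: q) i (by simp)
    have hpb2 : p.length < (u ++ (i+1) :: v).length := by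
      simp only [len_mid] at hkb' ⊢; omega
    have h6 := hpt' p.length hpc hpb2
    rw [hcp] at h6
    rcases mid_cases u v (i+1) p.length hpb2 with ⟨hlt2, hm⟩ | ⟨he2, _⟩ | ⟨hgt2, _⟩
    · have := hu _ hm; omega
    · omega
    · omega
  obtain ⟨p, q, hce, g1, g2, g3, g4⟩ := decomp_i1 hcs hmem1 hinot
  have hplen : p.length < cl.length := by rw [hce, len_mid]; omega
  have hcp1 : cl[p.length] = i + 1 := by
    rw [List.getElem_of_eq hce hplen]
    exact getElem_mid p q (i+1) (by rw [← hce]; exact hplen)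
  have hpu : p.length = u.length :=
    sorted_getElem_inj hcs hplen hk (by simp only [List.get_eq_getElem]; rw [hcu, hcp1])
  refine ⟨p ++ i :: q, ⟨⟨chain'_iff_sorted.mpr (sorted_mid g1 g2 g3 g4 (by omega) (by omega)), ?_⟩,
    ?_⟩, ?_⟩
  · rw [forall₂_le_iff']
    have hlc : (p ++ i :: q).length = cl.length := by rw [hce, len_mid, len_mid]
    refine ⟨by omega, fun k2 hk2 hk2' => ?_⟩
    by_cases hk2p : k2 = p.length
    · subst hk2p
      rw [getElem_mid p q i hk2]
      simp only [hpu]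
      rw [getElem_mid u v i (by simp only [len_mid]; omega)]
    · have hk2c : k2 < cl.length := by omega
      have hk2b' : k2 < (u ++ (i+1) :: v).length := by simp only [len_mid] at hk2' ⊢; omega
      have h7 := hpt' k2 hk2c hk2b'
      rw [List.getElem_of_eq hce hk2c] at h7
      rw [getElem_mid_ne p q i (i+1) k2 hk2 (by rw [← hce]; exact hk2c) hk2p]
      rw [getElem_mid_ne u v i (i+1) k2 hk2' hk2b' (by omega)]
      exact h7
  · rw [(siAct_rep g1 g2 g3 g4).1, ← hce]
    exact hc'
  · rw [(siAct_rep g1 g2 g3 g4).1, ← hce]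

lemma AL_self_not (hu : ∀ y ∈ u, y < i) (hv : ∀ y ∈ v, i + 1 < y) :
    (u ++ (i+1) :: v) ∉ AL (u ++ i :: v) := by
  rintro ⟨-, hf⟩
  rw [forall₂_le_iff'] at hf
  have hk : u.length < (u ++ (i+1) :: v).length := by rw [len_mid]; omega
  have hk' : u.length < (u ++ i :: v).length := by rw [len_mid]; omega
  have := hf.2 u.length hk hk'
  rw [getElem_mid u v (i+1) hk, getElem_mid u v i hk'] at this
  omega

end case2


theorem main_list {i : ℕ} {b : List ℕ} (hb : b.Pairwise (· < ·)) (hmem : i + 1 ∈ b → i ∈ b) :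
    AL (siAct i b) = AL b ∪ (siAct i '' {a | a ∈ AL b ∧ siAct i a ∉ AL b}) := by
  by_cases hcase : i ∈ b ∧ i + 1 ∉ b
  · obtain ⟨hi, hi1⟩ := hcase
    obtain ⟨u, v, rfl, hu, hv, hus, hvs⟩ := decomp_i hb hi hi1
    rw [(siAct_rep hu hv hus hvs).1]
    ext cl
    constructor
    · intro hcl
      by_cases hclb : cl ∈ AL (u ++ i :: v)
      · exact Or.inl hclb
      · obtain ⟨a, ha, he⟩ := AL_bwd hu hv hus hvs hcl hclb
        exact Or.inr ⟨a, ha, he⟩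
    · rintro (hcl | ⟨a, ha, rfl⟩)
      · exact AL_sub hu hv hcl
      · exact AL_fwd hu hv hus hvs ha.1 ha.2
  · have hiff : i ∈ b ↔ i + 1 ∈ b := by tauto
    rw [siAct_fix hb hiff]
    have hemp : {a | a ∈ AL b ∧ siAct i a ∉ AL b} = ∅ := by
      ext a
      simp only [Set.mem_setOf_eq, Set.mem_empty_iff_false, iff_false, not_and, not_not]
      exact fun ha => AL_closure hb hiff ha
    rw [hemp]
    simp

lemma simpleT_coe {n i : ℕ} (h : i + 1 < n) (x : Fin n) :
    ((simpleT n i h x : Fin n) : ℕ) = Equiv.swap i (i+1) (x : ℕ) := by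
  unfold simpleT
  rcases eq_or_ne x ⟨i, Nat.lt_of_succ_lt h⟩ with rfl | hx
  · rw [Equiv.swap_apply_left]
    have : ((⟨i, Nat.lt_of_succ_lt h⟩ : Fin n) : ℕ) = i := rfl
    rw [this, Equiv.swap_apply_left]
  · rcases eq_or_ne x ⟨i+1, h⟩ with rfl | hx1
    · rw [Equiv.swap_apply_right]
      have : ((⟨i+1, h⟩ : Fin n) : ℕ) = i + 1 := rfl
      rw [this, Equiv.swap_apply_right]
    · rw [Equiv.swap_apply_of_ne_of_ne hx hx1,
        Equiv.swap_apply_of_ne_of_ne (fun e => hx (Fin.ext e)) (fun e => hx1 (Fin.ext e))]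

lemma simpleT_lt_iff {n i : ℕ} (h : i + 1 < n) {x y : Fin n} (hxy : x ≠ y)
    (h1 : ¬(x = ⟨i, Nat.lt_of_succ_lt h⟩ ∧ y = ⟨i+1, h⟩))
    (h2 : ¬(x = ⟨i+1, h⟩ ∧ y = ⟨i, Nat.lt_of_succ_lt h⟩)) :
    (simpleT n i h x < simpleT n i h y ↔ x < y) := by
  have cx := simpleT_coe h x
  have cy := simpleT_coe h y
  simp only [Fin.lt_def]
  rw [cx, cy]
  have e1 : ∀ m : ℕ, Equiv.swap i (i+1) m = if m = i then i + 1 else if m = i+1 then i else m :=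
    fun m => Equiv.swap_apply_def i (i+1) m
  rw [e1, e1]
  have hxyv : (x : ℕ) ≠ (y : ℕ) := fun e => hxy (Fin.ext e)
  have h1' : ¬((x : ℕ) = i ∧ (y : ℕ) = i + 1) := fun ⟨e1, e2⟩ => h1 ⟨Fin.ext e1, Fin.ext e2⟩
  have h2' : ¬((x : ℕ) = i + 1 ∧ (y : ℕ) = i) := fun ⟨e1, e2⟩ => h2 ⟨Fin.ext e1, Fin.ext e2⟩
  have hxn : (x : ℕ) < n := x.isLt
  have hyn : (y : ℕ) < n := y.isLt
  split_ifs <;> first | omega | tauto | (exfalso; omega) | (exfalso; tauto)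


lemma pos_lt {n : ℕ} (w : Equiv.Perm (Fin n)) {i : ℕ} (h : i + 1 < n)
    (hlen : invCount w < invCount (simpleT n i h * w)) :
    ((w⁻¹ ⟨i, Nat.lt_of_succ_lt h⟩ : Fin n) : ℕ) < ((w⁻¹ ⟨i+1, h⟩ : Fin n) : ℕ) := by
  set a0 : Fin n := ⟨i, Nat.lt_of_succ_lt h⟩ with ha0
  set b0 : Fin n := ⟨i+1, h⟩ with hb0
  by_contra hcon
  push_neg at hcon
  have hab : a0 ≠ b0 := fun e => by
    have : i = i + 1 := congrArg Fin.val e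
    omega
  have hne : (w⁻¹ b0 : Fin n) ≠ w⁻¹ a0 := fun e => hab (by
    have := congrArg w e
    simpa using this.symm)
  have hqp : (w⁻¹ b0 : Fin n) < w⁻¹ a0 := by
    rw [Fin.lt_def]
    have : ((w⁻¹ b0 : Fin n) : ℕ) ≠ ((w⁻¹ a0 : Fin n) : ℕ) := fun e => hne (Fin.ext e)
    omega
  set q0 : Fin n := w⁻¹ b0 with hq0
  set p0 : Fin n := w⁻¹ a0 with hp0
  have hwp0 : w p0 = a0 := Equiv.apply_symm_apply w a0
  have hwq0 : w q0 = b0 := Equiv.apply_symm_apply w b0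
  have hsab : simpleT n i h a0 = b0 := by unfold simpleT; rw [← ha0, ← hb0, Equiv.swap_apply_left]
  have hsba : simpleT n i h b0 = a0 := by unfold simpleT; rw [← ha0, ← hb0, Equiv.swap_apply_right]
  have hsub : (Finset.univ.filter
      (fun p : Fin n × Fin n => p.1 < p.2 ∧ (simpleT n i h * w) p.2 < (simpleT n i h * w) p.1)) ⊆
      (Finset.univ.filter (fun p : Fin n × Fin n => p.1 < p.2 ∧ w p.2 < w p.1)).erase (q0, p0) := by
    intro x hx
    rw [Finset.mem_filter] at hx
    simp only [Finset.mem_univ, true_and, Equiv.Perm.mul_apply] at hx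
    obtain ⟨hx1, hx2⟩ := hx
    have hxne : x ≠ (q0, p0) := by
      intro he
      rw [he] at hx2
      simp only [hwp0, hwq0, hsab, hsba] at hx2
      rw [Fin.lt_def] at hx2
      have e1 : (a0 : ℕ) = i := rfl
      have e2 : (b0 : ℕ) = i + 1 := rfl
      omega
    have hxy : w x.2 ≠ w x.1 := fun e => (ne_of_lt hx1).symm (w.injective e)
    have hc1 : ¬(w x.2 = a0 ∧ w x.1 = b0) := by
      rintro ⟨e1, e2⟩
      exact hxne (Prod.ext (w.injective (e2.trans hwq0.symm)) (w.injective (e1.trans hwp0.symm)))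
    have hc2 : ¬(w x.2 = b0 ∧ w x.1 = a0) := by
      rintro ⟨e1, e2⟩
      have hx2q : x.2 = q0 := w.injective (e1.trans hwq0.symm)
      have hx1p : x.1 = p0 := w.injective (e2.trans hwp0.symm)
      rw [hx2q, hx1p] at hx1
      exact absurd (lt_trans hx1 hqp) (lt_irrefl _)
    rw [Finset.mem_erase, Finset.mem_filter]
    refine ⟨hxne, Finset.mem_univ _, hx1, ?_⟩
    rw [← simpleT_lt_iff h hxy (by rw [← ha0, ← hb0]; exact hc1) (by rw [← ha0, ← hb0]; exact hc2)]
    exact hx2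
  have hmem : (q0, p0) ∈
      Finset.univ.filter (fun p : Fin n × Fin n => p.1 < p.2 ∧ w p.2 < w p.1) := by
    rw [Finset.mem_filter]
    refine ⟨Finset.mem_univ _, hqp, ?_⟩
    rw [hwp0, hwq0, Fin.lt_def]
    show i < i + 1
    omega
  have h1 : invCount (simpleT n i h * w) ≤
      ((Finset.univ.filter (fun p : Fin n × Fin n => p.1 < p.2 ∧ w p.2 < w p.1)).erase
        (q0, p0)).card := Finset.card_le_card hsub
  have h2 := Finset.card_erase_lt_of_mem hmem
  unfold invCount at hlen h1
  omega


lemma firstVals_mul {n : ℕ} (w : Equiv.Perm (Fin n)) {i : ℕ} (h : i + 1 < n) (l : ℕ) :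
    firstVals (simpleT n i h * w) l = (firstVals w l).image (fun x => Equiv.swap i (i+1) x) := by
  unfold firstVals
  rw [Finset.image_image]
  apply Finset.image_congr
  intro j _
  simp only [Function.comp_apply, Equiv.Perm.mul_apply]
  exact simpleT_coe h (w j)

lemma wSorted_mul {n : ℕ} (w : Equiv.Perm (Fin n)) {i : ℕ} (h : i + 1 < n) (l : ℕ) :
    wSorted (simpleT n i h * w) l = siAct i (wSorted w l) := by
  unfold wSorted
  rw [firstVals_mul]
  set B := firstVals w l with hB
  set e : ℕ ↪ ℕ := ⟨fun x => Equiv.swap i (i+1) x, (Equiv.swap i (i+1)).injective⟩ with he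
  have him : B.image (fun x => Equiv.swap i (i+1) x) = B.map e := (Finset.map_eq_image e B).symm
  rw [him]
  refine List.Perm.eq_of_pairwise'
    ((Finset.pairwise_sort _ _)) (List.pairwise_insertionSort _ _) ?_
  have p1 : (B.map e).sort (· ≤ ·) ~ (B.map e).toList := Finset.sort_perm_toList _ _
  have p2 : List.insertionSort (· ≤ ·) ((B.sort (· ≤ ·)).map (fun x => Equiv.swap i (i+1) x)) ~
      (B.sort (· ≤ ·)).map (fun x => Equiv.swap i (i+1) x) := List.perm_insertionSort _ _
  have p3 : (B.sort (· ≤ ·)).map (fun x => Equiv.swap i (i+1) x) ~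
      B.toList.map (fun x => Equiv.swap i (i+1) x) :=
    (Finset.sort_perm_toList _ _).map _
  have p4 : (B.map e).toList ~ B.toList.map (fun x => Equiv.swap i (i+1) x) := by
    rw [← Multiset.coe_eq_coe, Finset.coe_toList]
    rw [Finset.map_val, ← Finset.coe_toList B, Multiset.map_coe]
    rfl
  exact p1.trans (p4.trans (p3.symm.trans p2.symm))

lemma mem_firstVals {n : ℕ} (w : Equiv.Perm (Fin n)) (l m : ℕ) :
    m ∈ firstVals w l ↔ ∃ j : Fin n, (j : ℕ) < l ∧ (w j : ℕ) = m := by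
  unfold firstVals
  simp [Finset.mem_image, Finset.mem_filter]

lemma mem_mono {n : ℕ} (w : Equiv.Perm (Fin n)) {i : ℕ} (h : i + 1 < n)
    (hpos : ((w⁻¹ ⟨i, Nat.lt_of_succ_lt h⟩ : Fin n) : ℕ) < ((w⁻¹ ⟨i+1, h⟩ : Fin n) : ℕ))
    (l : ℕ) (hm : i + 1 ∈ firstVals w l) : i ∈ firstVals w l := by
  rw [mem_firstVals] at hm ⊢
  obtain ⟨j, hj, hji⟩ := hm
  have hwj : w j = ⟨i+1, h⟩ := Fin.ext hji
  have hj' : j = w⁻¹ ⟨i+1, h⟩ := by rw [← hwj]; simp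
  refine ⟨w⁻¹ ⟨i, Nat.lt_of_succ_lt h⟩, by omega, ?_⟩
  exact congrArg Fin.val (Equiv.apply_symm_apply w _)

lemma exists_l {n : ℕ} (w : Equiv.Perm (Fin n)) {i : ℕ} (h : i + 1 < n)
    (hpos : ((w⁻¹ ⟨i, Nat.lt_of_succ_lt h⟩ : Fin n) : ℕ) < ((w⁻¹ ⟨i+1, h⟩ : Fin n) : ℕ)) :
    ∃ l, i ∈ firstVals w l ∧ i + 1 ∉ firstVals w l := by
  refine ⟨((w⁻¹ ⟨i, Nat.lt_of_succ_lt h⟩ : Fin n) : ℕ) + 1, ?_, ?_⟩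
  · rw [mem_firstVals]
    exact ⟨w⁻¹ ⟨i, Nat.lt_of_succ_lt h⟩, by omega, congrArg Fin.val (Equiv.apply_symm_apply w _)⟩
  · rw [mem_firstVals]
    rintro ⟨j, hj, hji⟩
    have hwj : w j = ⟨i+1, h⟩ := Fin.ext hji
    have hj' : j = w⁻¹ ⟨i+1, h⟩ := by rw [← hwj]; simp
    omega


/-- If `ℓ(s_i w) > ℓ(w)` then `A_l(s_i w)` is the disjoint union of `A_l(w)` and the
`s_i`-images of `A_{l,i}(w)`, the latter being nonempty for some `l`; in particular
`A_l(w) ⊆ A_l(s_i w)` and `A_l(s_i w)` is preserved under the action of `s_i`. -/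
theorem stmt9 (n : ℕ) (w : Equiv.Perm (Fin n)) (i : ℕ) (h : i + 1 < n)
    (hlen : invCount w < invCount (simpleT n i h * w)) :
    (∀ l : ℕ,
      A (simpleT n i h * w) l = A w l ∪ (siAct i '' Ai w l i) ∧
      Disjoint (A w l) (siAct i '' Ai w l i) ∧
      A w l ⊆ A (simpleT n i h * w) l ∧
      (∀ a ∈ A (simpleT n i h * w) l, siAct i a ∈ A (simpleT n i h * w) l)) ∧
    ∃ l : ℕ, (siAct i '' Ai w l i).Nonempty := by
  have hpos := pos_lt w h hlen
  have hA : ∀ l : ℕ, A (simpleT n i h * w) l = A w l ∪ (siAct i '' Ai w l i) := by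
    intro l
    have hbs : (wSorted w l).Pairwise (· < ·) := (Finset.sortedLT_sort _).pairwise
    have hmem : i + 1 ∈ wSorted w l → i ∈ wSorted w l := by
      intro hm
      simp only [wSorted, Finset.mem_sort] at hm ⊢
      exact mem_mono w h hpos l hm
    have h1 : A (simpleT n i h * w) l = AL (siAct i (wSorted w l)) := by
      show AL (wSorted (simpleT n i h * w) l) = _
      rw [wSorted_mul]
    rw [h1, main_list hbs hmem]
    rfl
  refine ⟨fun l => ⟨hA l, ?_, ?_, ?_⟩, ?_⟩
  · rw [Set.disjoint_left]
    rintro x hx ⟨a, ha, rfl⟩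
    exact ha.2 hx
  · intro a ha
    rw [hA l]
    exact Or.inl ha
  · intro a ha
    rw [hA l] at ha ⊢
    rcases ha with ha | ⟨a0, ha0, rfl⟩
    · by_cases hsa : siAct i a ∈ A w l
      · exact Or.inl hsa
      · exact Or.inr ⟨a, ⟨ha, hsa⟩, rfl⟩
    · rw [siAct_invol (chain'_iff_sorted.mp ha0.1.1)]
      exact Or.inl ha0.1
  · obtain ⟨l, hi, hi1⟩ := exists_l w h hpos
    have hbs : (wSorted w l).Pairwise (· < ·) := (Finset.sortedLT_sort _).pairwise
    have hib : i ∈ wSorted w l := by simp only [wSorted, Finset.mem_sort]; exact hi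
    have hib1 : i + 1 ∉ wSorted w l := by simp only [wSorted, Finset.mem_sort]; exact hi1
    obtain ⟨u, v, hbe, hu, hv, hus, hvs⟩ := decomp_i hbs hib hib1
    refine ⟨l, siAct i (wSorted w l), wSorted w l, ⟨⟨chain'_iff_sorted.mpr hbs,
      List.forall₂_same.mpr (fun x _ => le_refl x)⟩, ?_⟩, rfl⟩
    show siAct i (wSorted w l) ∉ A w l
    have he2 : siAct i (wSorted w l) = u ++ (i+1) :: v := by
      rw [hbe]; exact (siAct_rep hu hv hus hvs).1
    rw [he2]
    intro hmem2
    refine AL_self_not hu hv ?_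
    have : A w l = AL (u ++ i :: v) := by show AL (wSorted w l) = _; rw [hbe]
    rw [this] at hmem2
    exact hmem2
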